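/- Let 1 ≤ p ≤ 2, k, r ≥ 2, Q = (r-1)(k-1) > 1. Suppose f : ℕ → ℂ satisfies |f(n)| ≤ C (1+n)^(-(m+2)) Q^(-n/p) for all n, for some constant C and integer m ≥ 0. Then the Abel transform A f satisfies |A f(h)| ≤ C' (1+h)^(-m) Q^(-(1/p - 1/2) h) for all h ∈ ℕ, where C' depends only on C, p, m, k, r. -/

import Mathlib

open Real

theorem stmt6 (k r : ℕ) (hk : 2 ≤ k) (hr : 2 ≤ r)
    (Q : ℝ) (hQ : Q = ((r : ℝ) - 1) * ((k : ℝ) - 1)) (hQ1 : 1 < Q)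
    (p : ℝ) (hp1 : 1 ≤ p) (hp2 : p ≤ 2)
    (C : ℝ) (hC : 0 < C) (m : ℕ)
    (f : ℕ → ℂ)
    (hf : ∀ n : ℕ, ‖f n‖ ≤ C * (1 + (n : ℝ)) ^ (-((m : ℝ) + 2)) * Q ^ (-(n : ℝ) / p))
    (A : ℕ → ℂ)
    (hA : ∀ h : ℕ, A h =
      ((Q ^ ((h : ℝ) / 2) : ℝ) : ℂ) * f h
      + ((k : ℂ) - 2) *
          ∑' j : ℕ, ((Q ^ ((h : ℝ) / 2 + (j : ℝ)) : ℝ) : ℂ) * f (h + 2 * j + 1)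
      + (((r : ℂ) - 2) / ((r : ℂ) - 1)) *
          ∑' j : ℕ, ((Q ^ ((h : ℝ) / 2 + (j : ℝ) + 1) : ℝ) : ℂ) * f (h + 2 * j + 2)) :
    ∃ C' : ℝ, 0 < C' ∧ ∀ h : ℕ,
      ‖A h‖ ≤ C' * (1 + (h : ℝ)) ^ (-(m : ℝ)) * Q ^ (-(1 / p - 1 / 2) * (h : ℝ)) := by
  have hQ0 : (0:ℝ) < Q := lt_trans one_pos hQ1
  have hp0 : (0:ℝ) < p := lt_of_lt_of_le one_pos hp1
  -- summability of (1+j)^{-2}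
  have hsum2 : Summable (fun j : ℕ => (1 + (j:ℝ)) ^ (-(2:ℝ))) := by
    have h1 : Summable (fun n : ℕ => (n:ℝ) ^ (-(2:ℝ))) := by
      rw [Real.summable_nat_rpow]; norm_num
    have h2 := h1.comp_injective Nat.succ_injective
    refine h2.congr fun j => ?_
    simp [Function.comp, Nat.succ_eq_add_one]
    norm_num [add_comm]
  set S := ∑' j : ℕ, (1 + (j:ℝ)) ^ (-(2:ℝ)) with hS
  have hSnn : ∀ j : ℕ, (0:ℝ) ≤ (1 + (j:ℝ)) ^ (-(2:ℝ)) := fun j =>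
    Real.rpow_nonneg (by positivity) _
  have hS1 : (1:ℝ) ≤ S := by
    have := Summable.le_tsum hsum2 0 (fun j _ => hSnn j)
    simp only [Nat.cast_zero, add_zero, Real.one_rpow] at this
    exact this
  have hS0 : (0:ℝ) < S := lt_of_lt_of_le one_pos hS1
  -- key pointwise bound
  have key : ∀ (h n j : ℕ) (e : ℝ), (h:ℝ) ≤ n → (j:ℝ) ≤ n →
      e - (n:ℝ)/p ≤ (1/2 - 1/p) * h →
      Q ^ e * ‖f n‖ ≤
        C * ((1+(h:ℝ)) ^ (-(m:ℝ)) * Q ^ ((1/2-1/p)*(h:ℝ))) * (1+(j:ℝ)) ^ (-(2:ℝ)) := by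
    intro h n j e hhn hjn he
    have h1 : Q ^ e * ‖f n‖ ≤ Q ^ e * (C * (1+(n:ℝ))^(-((m:ℝ)+2)) * Q ^ (-(n:ℝ)/p)) :=
      mul_le_mul_of_nonneg_left (hf n) (Real.rpow_nonneg hQ0.le _)
    have h2 : Q ^ e * Q ^ (-(n:ℝ)/p) = Q ^ (e - (n:ℝ)/p) := by
      rw [← Real.rpow_add hQ0]; ring_nf
    have h3 : Q ^ (e - (n:ℝ)/p) ≤ Q ^ ((1/2-1/p)*(h:ℝ)) :=
      Real.rpow_le_rpow_of_exponent_le hQ1.le he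
    have h4 : (1+(n:ℝ))^(-((m:ℝ)+2)) ≤ (1+(h:ℝ)) ^ (-(m:ℝ)) * (1+(j:ℝ)) ^ (-(2:ℝ)) := by
      have e1 : (1+(n:ℝ))^(-((m:ℝ)+2)) = (1+(n:ℝ))^(-(m:ℝ)) * (1+(n:ℝ))^(-(2:ℝ)) := by
        rw [← Real.rpow_add (by positivity)]; ring_nf
      rw [e1]
      have b1 : (1+(n:ℝ))^(-(m:ℝ)) ≤ (1+(h:ℝ)) ^ (-(m:ℝ)) :=
        Real.rpow_le_rpow_of_nonpos (by positivity) (by linarith) (neg_nonpos.mpr (Nat.cast_nonneg m))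
      have b2 : (1+(n:ℝ))^(-(2:ℝ)) ≤ (1+(j:ℝ)) ^ (-(2:ℝ)) :=
        Real.rpow_le_rpow_of_nonpos (by positivity) (by linarith) (by norm_num)
      exact mul_le_mul b1 b2 (Real.rpow_nonneg (by positivity) _)
        (Real.rpow_nonneg (by positivity) _)
    calc Q ^ e * ‖f n‖ ≤ Q ^ e * (C * (1+(n:ℝ))^(-((m:ℝ)+2)) * Q ^ (-(n:ℝ)/p)) := h1
      _ = C * (1+(n:ℝ))^(-((m:ℝ)+2)) * Q ^ (e - (n:ℝ)/p) := by rw [← h2]; ring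
      _ ≤ C * ((1+(h:ℝ)) ^ (-(m:ℝ)) * (1+(j:ℝ)) ^ (-(2:ℝ))) * Q ^ ((1/2-1/p)*(h:ℝ)) := by
          apply mul_le_mul (mul_le_mul_of_nonneg_left h4 hC.le) h3
            (Real.rpow_nonneg hQ0.le _)
          positivity
      _ = C * ((1+(h:ℝ)) ^ (-(m:ℝ)) * Q ^ ((1/2-1/p)*(h:ℝ))) * (1+(j:ℝ)) ^ (-(2:ℝ)) := by
          ring
  refine ⟨C * (1 + (((k:ℝ)-2) + ((r:ℝ)-2)/((r:ℝ)-1)) * S), ?_, ?_⟩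
  · have hk2 : (0:ℝ) ≤ (k:ℝ) - 2 := by
      have : (2:ℝ) ≤ k := by exact_mod_cast hk
      linarith
    have hr2 : (0:ℝ) ≤ ((r:ℝ)-2)/((r:ℝ)-1) := by
      have : (2:ℝ) ≤ r := by exact_mod_cast hr
      apply div_nonneg <;> linarith
    positivity
  intro h
  set E : ℝ := (1+(h:ℝ)) ^ (-(m:ℝ)) * Q ^ ((1/2-1/p)*(h:ℝ)) with hE
  have hEnn : 0 ≤ E := mul_nonneg (Real.rpow_nonneg (by positivity) _)
    (Real.rpow_nonneg hQ0.le _)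
  -- norms of the three terms
  have hnorm1 : ∀ j : ℕ, ‖((Q ^ ((h : ℝ) / 2 + (j : ℝ)) : ℝ) : ℂ) * f (h + 2 * j + 1)‖
      ≤ C * E * (1+(j:ℝ)) ^ (-(2:ℝ)) := by
    intro j
    rw [norm_mul, Complex.norm_real, Real.norm_eq_abs,
      abs_of_nonneg (Real.rpow_nonneg hQ0.le _)]
    have : ((h + 2*j + 1 : ℕ) : ℝ) = (h:ℝ) + 2*j + 1 := by push_cast; ring
    have hj0 : (0:ℝ) ≤ j := Nat.cast_nonneg j
    have hh0 : (0:ℝ) ≤ h := Nat.cast_nonneg h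
    apply key h (h + 2*j + 1) j _ (by rw [this]; linarith) (by rw [this]; linarith)
    rw [this]
    have h1p : 1/2 ≤ 1/p := by
      apply one_div_le_one_div_of_le hp0 hp2
    have hexp : ((h:ℝ)+2*j+1)/p = (h:ℝ)/p + (2*j+1)/p := by ring
    rw [hexp]
    have : (2*(j:ℝ)+1)/p ≥ (2*j+1)/2 := by
      apply div_le_div_of_nonneg_left (by linarith) hp0 hp2
    have key2 : (1/2 - 1/p)*(h:ℝ) = (h:ℝ)/2 - (h:ℝ)/p := by ring
    linarith
  have hnorm2 : ∀ j : ℕ, ‖((Q ^ ((h : ℝ) / 2 + (j : ℝ) + 1) : ℝ) : ℂ) * f (h + 2 * j + 2)‖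
      ≤ C * E * (1+(j:ℝ)) ^ (-(2:ℝ)) := by
    intro j
    rw [norm_mul, Complex.norm_real, Real.norm_eq_abs,
      abs_of_nonneg (Real.rpow_nonneg hQ0.le _)]
    have hc : ((h + 2*j + 2 : ℕ) : ℝ) = (h:ℝ) + 2*j + 2 := by push_cast; ring
    have hj0 : (0:ℝ) ≤ j := Nat.cast_nonneg j
    have hh0 : (0:ℝ) ≤ h := Nat.cast_nonneg h
    apply key h (h + 2*j + 2) j _ (by rw [hc]; linarith) (by rw [hc]; linarith)
    rw [hc]
    have hexp : ((h:ℝ)+2*j+2)/p = (h:ℝ)/p + (2*j+2)/p := by ring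
    rw [hexp]
    have hdiv : (2*(j:ℝ)+2)/p ≥ (2*j+2)/2 := by
      apply div_le_div_of_nonneg_left (by linarith) hp0 hp2
    have key2 : (1/2 - 1/p)*(h:ℝ) = (h:ℝ)/2 - (h:ℝ)/p := by ring
    linarith
  have hnorm0 : ‖((Q ^ ((h : ℝ) / 2) : ℝ) : ℂ) * f h‖ ≤ C * E := by
    rw [norm_mul, Complex.norm_real, Real.norm_eq_abs,
      abs_of_nonneg (Real.rpow_nonneg hQ0.le _)]
    have hh0 : (0:ℝ) ≤ h := Nat.cast_nonneg h
    have := key h h 0 ((h:ℝ)/2) le_rfl (by exact_mod_cast hh0) (by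
      have key2 : (1/2 - 1/p)*(h:ℝ) = (h:ℝ)/2 - (h:ℝ)/p := by ring
      linarith)
    have he2 : C * ((1+(h:ℝ))^(-(m:ℝ)) * Q^((1/2-1/p)*(h:ℝ))) * (1+((0:ℕ):ℝ))^(-(2:ℝ))
        = C * E := by
      rw [hE]; norm_num
    rw [← he2]
    exact this
  -- summability of the two series' norms
  have hsumCE : Summable (fun j : ℕ => C * E * (1+(j:ℝ)) ^ (-(2:ℝ))) :=
    hsum2.mul_left _
  have hsn1 : Summable (fun j : ℕ =>
      ‖((Q ^ ((h : ℝ) / 2 + (j : ℝ)) : ℝ) : ℂ) * f (h + 2 * j + 1)‖) :=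
    Summable.of_nonneg_of_le (fun j => norm_nonneg _) hnorm1 hsumCE
  have hsn2 : Summable (fun j : ℕ =>
      ‖((Q ^ ((h : ℝ) / 2 + (j : ℝ) + 1) : ℝ) : ℂ) * f (h + 2 * j + 2)‖) :=
    Summable.of_nonneg_of_le (fun j => norm_nonneg _) hnorm2 hsumCE
  have htsum : ∑' j : ℕ, (C * E * (1+(j:ℝ)) ^ (-(2:ℝ))) = C * E * S := tsum_mul_left
  have ht1 : ‖∑' j : ℕ, ((Q ^ ((h : ℝ) / 2 + (j : ℝ)) : ℝ) : ℂ) * f (h + 2 * j + 1)‖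
      ≤ C * E * S := by
    calc _ ≤ ∑' j : ℕ, ‖((Q ^ ((h : ℝ) / 2 + (j : ℝ)) : ℝ) : ℂ) * f (h + 2 * j + 1)‖ :=
          norm_tsum_le_tsum_norm hsn1
      _ ≤ ∑' j : ℕ, (C * E * (1+(j:ℝ)) ^ (-(2:ℝ))) := Summable.tsum_le_tsum hnorm1 hsn1 hsumCE
      _ = C * E * S := htsum
  have ht2 : ‖∑' j : ℕ, ((Q ^ ((h : ℝ) / 2 + (j : ℝ) + 1) : ℝ) : ℂ) * f (h + 2 * j + 2)‖
      ≤ C * E * S := by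
    calc _ ≤ ∑' j : ℕ, ‖((Q ^ ((h : ℝ) / 2 + (j : ℝ) + 1) : ℝ) : ℂ) * f (h + 2 * j + 2)‖ :=
          norm_tsum_le_tsum_norm hsn2
      _ ≤ ∑' j : ℕ, (C * E * (1+(j:ℝ)) ^ (-(2:ℝ))) := Summable.tsum_le_tsum hnorm2 hsn2 hsumCE
      _ = C * E * S := htsum
  -- coefficients
  have hk2 : (0:ℝ) ≤ (k:ℝ) - 2 := by
    have h2 : (2:ℝ) ≤ k := by exact_mod_cast hk
    linarith
  have hr1 : (1:ℝ) < r := by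
    have h2 : (2:ℝ) ≤ r := by exact_mod_cast hr
    linarith
  have hnk : ‖((k:ℂ) - 2)‖ = (k:ℝ) - 2 := by
    have : ((k:ℂ) - 2) = (((k:ℝ) - 2 : ℝ) : ℂ) := by push_cast; ring
    rw [this, Complex.norm_real, Real.norm_eq_abs, abs_of_nonneg hk2]
  have hr2r : (2:ℝ) ≤ r := by exact_mod_cast hr
  have hnr : ‖(((r:ℂ) - 2) / ((r:ℂ) - 1))‖ = ((r:ℝ)-2)/((r:ℝ)-1) := by
    have : (((r:ℂ) - 2) / ((r:ℂ) - 1)) = ((((r:ℝ)-2)/((r:ℝ)-1) : ℝ) : ℂ) := by push_cast; ring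
    rw [this, Complex.norm_real, Real.norm_eq_abs, abs_of_nonneg]
    apply div_nonneg <;> linarith
  have hfinal : ‖A h‖ ≤ C * E + ((k:ℝ)-2) * (C*E*S) + ((r:ℝ)-2)/((r:ℝ)-1) * (C*E*S) := by
    rw [hA h]
    refine le_trans (norm_add_le _ _) ?_
    refine add_le_add (le_trans (norm_add_le _ _) (add_le_add hnorm0 ?_)) ?_
    · rw [norm_mul, hnk]
      exact mul_le_mul_of_nonneg_left ht1 hk2
    · rw [norm_mul, hnr]
      exact mul_le_mul_of_nonneg_left ht2 (by apply div_nonneg <;> linarith)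
  have hEeq : (1 + (h : ℝ)) ^ (-(m : ℝ)) * Q ^ (-(1 / p - 1 / 2) * (h : ℝ)) = E := by
    have hexp : -(1/p-1/2)*(h:ℝ) = (1/2-1/p)*(h:ℝ) := by ring
    rw [hE, hexp]
  calc ‖A h‖ ≤ C * E + ((k:ℝ)-2) * (C*E*S) + ((r:ℝ)-2)/((r:ℝ)-1) * (C*E*S) := hfinal
    _ = C * (1 + (((k:ℝ)-2) + ((r:ℝ)-2)/((r:ℝ)-1)) * S) * E := by ring
    _ = C * (1 + (((k:ℝ)-2) + ((r:ℝ)-2)/((r:ℝ)-1)) * S) * (1 + (h : ℝ)) ^ (-(m : ℝ)) *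
        Q ^ (-(1 / p - 1 / 2) * (h : ℝ)) := by rw [← hEeq]; ring
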